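/- Let β > 0 and define 𝓛(x) = −β²·ln(1 + x/β²). Then for every F > 0: (i) 𝓛'(F) = −β²/(β² + F) < 0; (ii) 𝓛''(F) = β²/(β² + F)² > 0; (iii) Φ(F) := 𝓛'(F) + 2F·𝓛''(F) = β²(F − β²)/(β² + F)², and Φ(F) ≤ 0 if and only if F ≤ β². -/

import Mathlib

open Filter Topology Set

lemma logNED_hasDerivAt (β : ℝ) (hβ : 0 < β) (𝓛 : ℝ → ℝ)
    (h𝓛 : ∀ x, 𝓛 x = -β ^ 2 * Real.log (1 + x / β ^ 2)) {x : ℝ} (hx : 0 < x) :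
    HasDerivAt 𝓛 (-β ^ 2 / (β ^ 2 + x)) x := by
  have hb2 : (0:ℝ) < β ^ 2 := by positivity
  have hpos : (0:ℝ) < 1 + x / β ^ 2 := by positivity
  have h1 : HasDerivAt (fun y : ℝ => 1 + y / β ^ 2) (1 / β ^ 2) x := by
    simpa using ((hasDerivAt_id x).div_const (β ^ 2)).const_add 1
  have h2 : HasDerivAt (fun y : ℝ => Real.log (1 + y / β ^ 2))
      (1 / β ^ 2 / (1 + x / β ^ 2)) x := h1.log hpos.ne'
  have h3 := h2.const_mul (-β ^ 2)
  have heq : (fun y : ℝ => -β ^ 2 * Real.log (1 + y / β ^ 2)) = 𝓛 := by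
    funext y; rw [h𝓛 y]
  rw [heq] at h3
  refine h3.congr_deriv ?_
  field_simp

theorem log_NED_causality (β : ℝ) (hβ : 0 < β)
    (𝓛 : ℝ → ℝ) (h𝓛 : ∀ x, 𝓛 x = -β ^ 2 * Real.log (1 + x / β ^ 2)) :
    ∀ F > (0:ℝ),
      (deriv 𝓛 F = -β ^ 2 / (β ^ 2 + F) ∧ deriv 𝓛 F < 0) ∧
      (deriv (deriv 𝓛) F = β ^ 2 / (β ^ 2 + F) ^ 2 ∧ 0 < deriv (deriv 𝓛) F) ∧
      (deriv 𝓛 F + 2 * F * deriv (deriv 𝓛) F = β ^ 2 * (F - β ^ 2) / (β ^ 2 + F) ^ 2 ∧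
        (deriv 𝓛 F + 2 * F * deriv (deriv 𝓛) F ≤ 0 ↔ F ≤ β ^ 2)) := by
  intro F hF
  have hb2 : (0:ℝ) < β ^ 2 := by positivity
  have hden : (0:ℝ) < β ^ 2 + F := by linarith
  have hd1 : deriv 𝓛 F = -β ^ 2 / (β ^ 2 + F) :=
    (logNED_hasDerivAt β hβ 𝓛 h𝓛 hF).deriv
  -- second derivative
  have hev : deriv 𝓛 =ᶠ[𝓝 F] fun y => -β ^ 2 / (β ^ 2 + y) := by
    filter_upwards [eventually_gt_nhds hF] with y hy
    exact (logNED_hasDerivAt β hβ 𝓛 h𝓛 hy).deriv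
  have hg : HasDerivAt (fun y : ℝ => -β ^ 2 / (β ^ 2 + y))
      (β ^ 2 / (β ^ 2 + F) ^ 2) F := by
    have h1 : HasDerivAt (fun y : ℝ => β ^ 2 + y) 1 F := by
      simpa using (hasDerivAt_id F).const_add (β ^ 2)
    have h2 := (hasDerivAt_const F (-β ^ 2)).div h1 hden.ne'
    refine h2.congr_deriv ?_
    ring
  have hd2 : deriv (deriv 𝓛) F = β ^ 2 / (β ^ 2 + F) ^ 2 := by
    rw [Filter.EventuallyEq.deriv_eq hev]
    exact hg.deriv
  refine ⟨⟨hd1, ?_⟩, ⟨hd2, by rw [hd2]; positivity⟩, ?_, ?_⟩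
  · rw [hd1]; exact div_neg_of_neg_of_pos (by linarith) hden
  · rw [hd1, hd2]; field_simp; ring
  · rw [hd1, hd2]
    have key : -β ^ 2 / (β ^ 2 + F) + 2 * F * (β ^ 2 / (β ^ 2 + F) ^ 2)
        = β ^ 2 * (F - β ^ 2) / (β ^ 2 + F) ^ 2 := by field_simp; ring
    rw [key]
    rw [div_nonpos_iff]
    constructor
    · rintro (⟨h1, h2⟩ | ⟨h1, _⟩)
      · nlinarith
      · nlinarith
    · intro h
      right
      exact ⟨by nlinarith, by positivity⟩
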